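/- Assume the sequence of substitutions $(S_{a_n})$ is primitive. Then every tiling $x\in X_{\bar a}$ is repetitive: for every finite patch $x'\subset x$ there exists $r(x')>0$ such that every closed ball $B$ of radius $r(x')$ in $\mathbb R^d$ satisfies $\operatorname{supp}(\vec t+x')\subseteq B$ and $\vec t+x'\subset x$ for some $\vec t\in\mathbb R^d$. -/

import Mathlib

open Filter Topology Set Metric MeasureTheory

noncomputable section

/-- Points of `ℝ^d`. -/
abbrev Pt (d : ℕ) := EuclideanSpace ℝ (Fin d)

/-- A patch is a collection of subsets of `ℝ^d` (intended: tiles with disjoint interiors). -/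
abbrev Patch (d : ℕ) := Set (Set (Pt d))

/-- Translation of a single tile. -/
def tileTrans {d : ℕ} (t : Pt d) (D : Set (Pt d)) : Set (Pt d) := (fun p => t + p) '' D

/-- Translation of a patch, `t + x`. -/
def patchTrans {d : ℕ} (t : Pt d) (x : Patch d) : Patch d := tileTrans t '' x

/-- A tile: compact, connected, and the closure of its interior. -/
def IsTile {d : ℕ} (D : Set (Pt d)) : Prop :=
  IsCompact D ∧ IsConnected D ∧ D = closure (interior D)

/-- A patch: a collection of tiles with pairwise disjoint interiors. -/
def IsPatch {d : ℕ} (x : Patch d) : Prop :=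
  (∀ D ∈ x, IsTile D) ∧
  ∀ D ∈ x, ∀ D' ∈ x, D ≠ D' → interior D ∩ interior D' = ∅

/-- The support of a patch: the union of its tiles. -/
def psupp {d : ℕ} (x : Patch d) : Set (Pt d) := ⋃ D ∈ x, D

/-- A tiling of `ℝ^d`: a patch whose support is all of `ℝ^d`. -/
def IsTiling {d : ℕ} (x : Patch d) : Prop := IsPatch x ∧ psupp x = univ

/-- The tiles occurring in tilings of `X`. -/
def TilesOf {d : ℕ} (X : Set (Patch d)) : Set (Set (Pt d)) := {D | ∃ x ∈ X, D ∈ x}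

/-- `𝒫(X)`: the finite patches contained in tilings of `X`. -/
def Patches {d : ℕ} (X : Set (Patch d)) : Set (Patch d) :=
  {x' | x'.Finite ∧ ∃ x ∈ X, x' ⊆ x}

/-- `𝒫^N(X)`: the patches with `N` tiles contained in tilings of `X`. -/
def PatchesCard {d : ℕ} (X : Set (Patch d)) (N : ℕ) : Set (Patch d) :=
  {x' | x'.Finite ∧ x'.ncard = N ∧ ∃ x ∈ X, x' ⊆ x}

/-- `X` is invariant under the translation action. -/
def TransInvariant {d : ℕ} (X : Set (Patch d)) : Prop :=
  ∀ t : Pt d, ∀ x ∈ X, patchTrans t x ∈ X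

/-- Finite local complexity: for each `N` there are only finitely many `N`-tile patches
in tilings of `X` up to translation. -/
def FLC {d : ℕ} (X : Set (Patch d)) : Prop :=
  ∀ N : ℕ, ∃ F : Finset (Patch d),
    ∀ x' ∈ PatchesCard X N, ∃ y ∈ F, ∃ t : Pt d, patchTrans t y = x'

/-- The tiling metric `d_T`. -/
def dT {d : ℕ} (x y : Patch d) : ℝ :=
  sInf ({Real.sqrt 2 / 2} ∪
    {r : ℝ | 0 < r ∧ r < Real.sqrt 2 / 2 ∧
      ∃ x' ⊆ x, ∃ y' ⊆ y,
        Bornology.IsBounded (psupp x') ∧ Bornology.IsBounded (psupp y') ∧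
        closedBall (0 : Pt d) (1 / r) ⊆ psupp x' ∧
        closedBall (0 : Pt d) (1 / r) ⊆ psupp y' ∧
        ∃ t : Pt d, ‖t‖ ≤ r ∧ patchTrans t x' = y'})

/-- A (self-similar) substitution on the tiles of `X`, with dilatation factor `lam`,
extended tile-by-tile to patches, mapping finite patches of `X` to finite patches of `X`
and tilings of `X` to tilings of `X`. -/
structure Substitution (d : ℕ) (X : Set (Patch d)) where
  map : Set (Pt d) → Patch d
  lam : ℝ
  one_lt_lam : 1 < lam
  supp_eq : ∀ D ∈ TilesOf X, psupp (map D) = (fun p => lam • p) '' D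
  equivar : ∀ (t : Pt d) (D : Set (Pt d)), map (tileTrans t D) = patchTrans (lam • t) (map D)
  maps_patches : ∀ x' ∈ Patches X, (⋃ D ∈ x', map D) ∈ Patches X
  maps_X : ∀ x ∈ X, (⋃ D ∈ x, map D) ∈ X

/-- A substitution applied to a patch, tile by tile. -/
def substPatch {d : ℕ} {X : Set (Patch d)} (S : Substitution d X) (x : Patch d) : Patch d :=
  ⋃ D ∈ x, S.map D

/-- The structure matrix of a substitution with respect to prototiles `Dp`:
entry `(i,j)` is the number of tiles equivalent (translation-equal) to `Dp i` in `S (Dp j)`. -/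
def structMat {d l : ℕ} {X : Set (Patch d)} (Dp : Fin l → Set (Pt d)) (S : Substitution d X) :
    Matrix (Fin l) (Fin l) ℕ :=
  fun i j => {D | D ∈ S.map (Dp j) ∧ ∃ t : Pt d, D = tileTrans t (Dp i)}.ncard

/-- `Dp` is a complete family of pairwise non-equivalent prototiles of `X`. -/
def IsPrototileBasis {d l : ℕ} (X : Set (Patch d)) (Dp : Fin l → Set (Pt d)) : Prop :=
  (∀ i, Dp i ∈ TilesOf X) ∧
  (∀ i j, i ≠ j → ∀ t : Pt d, tileTrans t (Dp i) ≠ Dp j) ∧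
  ∀ D ∈ TilesOf X, ∃ i, ∃ t : Pt d, tileTrans t (Dp i) = D

/-- `S^n_ā = S_{a_1} ∘ S_{a_2} ∘ ⋯ ∘ S_{a_n}` acting on patches (`a 0` plays the role
of `a_1`). -/
def substSeq {d k : ℕ} {X : Set (Patch d)} (S : Fin k → Substitution d X) :
    (ℕ → Fin k) → ℕ → Patch d → Patch d
  | _, 0 => id
  | a, n + 1 => fun x => substPatch (S (a 0)) (substSeq S (fun i => a (i + 1)) n x)

/-- `A^n_ā = A_{a_1} A_{a_2} ⋯ A_{a_n}`. -/
def matSeq {l k : ℕ} (A : Fin k → Matrix (Fin l) (Fin l) ℕ) :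
    (ℕ → Fin k) → ℕ → Matrix (Fin l) (Fin l) ℕ
  | _, 0 => 1
  | a, n + 1 => A (a 0) * matSeq A (fun i => a (i + 1)) n

/-- Primitivity of the sequence of structure matrices `(A_{a_n})`: for every `n` some
product `A_{a_n} A_{a_{n+1}} ⋯ A_{a_{n+N}}` has all entries positive. -/
def SeqPrimitive {l k : ℕ} (A : Fin k → Matrix (Fin l) (Fin l) ℕ) (a : ℕ → Fin k) : Prop :=
  ∀ n : ℕ, ∃ N : ℕ, ∀ p q : Fin l, 0 < matSeq A (fun m => a (n + m)) (N + 1) p q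

/-- The multi-substitution tiling space `X_ā` (with initial tile `D`). -/
def multiSpace {d k : ℕ} {X : Set (Patch d)} (S : Fin k → Substitution d X) (a : ℕ → Fin k)
    (D : Set (Pt d)) : Set (Patch d) :=
  {x | x ∈ X ∧ ∀ x' ⊆ x, x'.Finite →
    ∃ n : ℕ, 0 < n ∧ ∃ t : Pt d, patchTrans t x' ⊆ substSeq S a n {D}}

/-- The substitution tiling space of a single substitution, given by its action
`F` on patches (with initial tile `D`). -/
def substSpaceF {d : ℕ} (X : Set (Patch d)) (F : Patch d → Patch d) (D : Set (Pt d)) :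
    Set (Patch d) :=
  {x | x ∈ X ∧ ∀ x' ⊆ x, x'.Finite →
    ∃ m : ℕ, 0 < m ∧ ∃ t : Pt d, patchTrans t x' ⊆ F^[m] {D}}

open Classical in
/-- The metric on `Σ = {1,…,k}^ℕ`: `d(ā,b̄) = 1/L` where `L` is the least (1-indexed)
position where the sequences differ, and `0` if they are equal. -/
def dSigma {k : ℕ} (a b : ℕ → Fin k) : ℝ :=
  if h : ∃ n, a n ≠ b n then 1 / ((Nat.find h : ℝ) + 1) else 0

/-- The shift `σ` on `Σ`. -/
def seqShift {k : ℕ} (a : ℕ → Fin k) : ℕ → Fin k := fun n => a (n + 1)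

/-- A substitution is recognizable if it is injective on `X`. -/
def Recognizable {d : ℕ} {X : Set (Patch d)} (S : Substitution d X) : Prop :=
  ∀ x ∈ X, ∀ y ∈ X, substPatch S x = substPatch S y → x = y

/-- A substitution is strongly recognizable if it is recognizable and `S(D') ⊆ S(x)`
implies `D' ∈ x` for every tiling `x ∈ X` and tile `D'`. -/
def StronglyRecognizable {d : ℕ} {X : Set (Patch d)} (S : Substitution d X) : Prop :=
  Recognizable S ∧ ∀ x ∈ X, ∀ D' ∈ TilesOf X, S.map D' ⊆ substPatch S x → D' ∈ x

/-- `L_{x'}(y')`: the number of translated copies of `x'` contained in `y'`. -/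
def Lcount {d : ℕ} (x' y' : Patch d) : ℕ := {t : Pt d | patchTrans t x' ⊆ y'}.ncard

/-- The Euclidean volume of the support of a patch. -/
def pvol {d : ℕ} (y' : Patch d) : ℝ := (volume (psupp y')).toReal

/-- `L^x_{x'}(H)`: the number of translated copies of `x'` contained in `x` whose support
is contained in `H`. -/
def LcountIn {d : ℕ} (x x' : Patch d) (H : Set (Pt d)) : ℕ :=
  {t : Pt d | patchTrans t x' ⊆ x ∧ psupp (patchTrans t x') ⊆ H}.ncard

/-- `H^{+r}`: the set of points at distance at most `r` from `H`. -/
def plusR {d : ℕ} (H : Set (Pt d)) (r : ℝ) : Set (Pt d) := {t | ∃ h ∈ H, dist t h ≤ r}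

/-- Van Hove sequence of subsets of `ℝ^d`. -/
def VanHove {d : ℕ} (H : ℕ → Set (Pt d)) : Prop :=
  ∀ r : ℝ, 0 ≤ r →
    Tendsto (fun n => (volume (plusR (frontier (H n)) r)).toReal / (volume (H n)).toReal)
      atTop (nhds 0)

/-- A tiling of `X_ā` which is an increasing union of translates of the supertiles
`S^{k_n}_ā(D)`. -/
def Hierarchical {d k : ℕ} {X : Set (Patch d)} (S : Fin k → Substitution d X) (a : ℕ → Fin k)
    (x : Patch d) : Prop :=
  ∃ (kn : ℕ → ℕ) (tn : ℕ → Pt d) (D : Set (Pt d)), D ∈ TilesOf X ∧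
    Tendsto kn atTop atTop ∧
    (∀ n, patchTrans (tn n) (substSeq S a (kn n) {D}) ⊆
      patchTrans (tn (n + 1)) (substSeq S a (kn (n + 1)) {D})) ∧
    x = ⋃ n, patchTrans (tn n) (substSeq S a (kn n) {D})

/-- The topology on the space of patches generated by the `d_T`-balls. -/
def tilingTopology (d : ℕ) : TopologicalSpace (Patch d) :=
  TopologicalSpace.generateFrom {U | ∃ (x : Patch d) (r : ℝ), 0 < r ∧ U = {y | dT x y < r}}

/-- The Borel σ-algebra associated to the tiling topology. -/
def tilingMeasurable (d : ℕ) : MeasurableSpace (Patch d) :=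
  @borel (Patch d) (tilingTopology d)

/-- A Borel probability measure concentrated on `Y` and invariant under the translation
action. -/
def GoodMeasure {d : ℕ} (Y : Set (Patch d))
    (μ : @MeasureTheory.Measure (Patch d) (tilingMeasurable d)) : Prop :=
  letI := tilingMeasurable d
  μ Set.univ = 1 ∧ μ Yᶜ = 0 ∧
    ∀ (t : Pt d) (s : Set (Patch d)), μ (patchTrans t ⁻¹' s) = μ s

/-- `ν` is the pushforward of `μ` under `F`. -/
def PushForwardEq {d : ℕ} (F : Patch d → Patch d)
    (μ ν : @MeasureTheory.Measure (Patch d) (tilingMeasurable d)) : Prop :=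
  letI := tilingMeasurable d
  ∀ s : Set (Patch d), μ (F ⁻¹' s) = ν s

section Aux

variable {d k : ℕ} {X : Set (Patch d)}

lemma tileTrans_tileTrans (s t : Pt d) (D : Set (Pt d)) :
    tileTrans s (tileTrans t D) = tileTrans (s + t) D := by
  simp only [tileTrans, Set.image_image, add_assoc]

lemma tileTrans_zero (D : Set (Pt d)) : tileTrans 0 D = D := by
  simp [tileTrans]

lemma patchTrans_patchTrans (s t : Pt d) (x : Patch d) :
    patchTrans s (patchTrans t x) = patchTrans (s + t) x := by
  simp only [patchTrans, Set.image_image, tileTrans_tileTrans]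

lemma patchTrans_zero (x : Patch d) : patchTrans 0 x = x := by
  simp [patchTrans, tileTrans_zero]

lemma patchTrans_mono {x y : Patch d} (h : x ⊆ y) (t : Pt d) :
    patchTrans t x ⊆ patchTrans t y := Set.image_mono h

lemma mem_patchTrans_of_mem {x : Patch d} {D : Set (Pt d)} (h : D ∈ x) (t : Pt d) :
    tileTrans t D ∈ patchTrans t x := ⟨D, h, rfl⟩

lemma patchTrans_singleton (t : Pt d) (D : Set (Pt d)) :
    patchTrans t {D} = {tileTrans t D} := Set.image_singleton

lemma psupp_mono {x y : Patch d} (h : x ⊆ y) : psupp x ⊆ psupp y :=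
  Set.biUnion_subset_biUnion_left h

lemma psupp_singleton (D : Set (Pt d)) : psupp ({D} : Patch d) = D := by
  simp [psupp]

lemma psupp_patchTrans (t : Pt d) (x : Patch d) :
    psupp (patchTrans t x) = (fun p => t + p) '' psupp x := by
  unfold psupp patchTrans
  rw [Set.biUnion_image]
  simp only [tileTrans, Set.image_iUnion]

lemma mem_psupp_of_mem {x : Patch d} {D : Set (Pt d)} (hD : D ∈ x) : D ⊆ psupp x :=
  fun p hp => Set.mem_biUnion hD hp

lemma substPatch_mono (S : Substitution d X) {x y : Patch d} (h : x ⊆ y) :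
    substPatch S x ⊆ substPatch S y :=
  Set.biUnion_subset_biUnion_left h

lemma substPatch_patchTrans (S : Substitution d X) (t : Pt d) (x : Patch d) :
    substPatch S (patchTrans t x) = patchTrans (S.lam • t) (substPatch S x) := by
  unfold substPatch patchTrans
  rw [Set.biUnion_image]
  rw [show (⋃ D ∈ x, S.map (tileTrans t D)) = ⋃ D ∈ x, tileTrans (S.lam • t) '' (S.map D) by
    refine Set.iUnion₂_congr fun D hD => ?_
    rw [S.equivar t D]; rfl]
  exact (Set.image_iUnion₂ _ _).symm

lemma substSeq_mono (S : Fin k → Substitution d X) (a : ℕ → Fin k) (n : ℕ)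
    {x y : Patch d} (h : x ⊆ y) : substSeq S a n x ⊆ substSeq S a n y := by
  induction n generalizing a x y with
  | zero => exact h
  | succ n ih => exact substPatch_mono _ (ih _ h)

lemma substPatch_biUnion (S : Substitution d X) {ι : Type*} (s : Set ι) (f : ι → Patch d) :
    substPatch S (⋃ i ∈ s, f i) = ⋃ i ∈ s, substPatch S (f i) := by
  unfold substPatch
  ext E
  simp only [Set.mem_iUnion]
  constructor
  · rintro ⟨D, ⟨⟨i, hi, hD⟩, hE⟩⟩
    exact ⟨i, hi, D, hD, hE⟩
  · rintro ⟨i, hi, D, hD, hE⟩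
    exact ⟨D, ⟨⟨i, hi, hD⟩, hE⟩⟩

lemma substSeq_biUnion (S : Fin k → Substitution d X) (a : ℕ → Fin k) (n : ℕ) (x : Patch d) :
    substSeq S a n x = ⋃ E ∈ x, substSeq S a n {E} := by
  induction n generalizing a x with
  | zero => simp [substSeq]
  | succ n ih =>
    show substPatch _ (substSeq S _ n x) = ⋃ E ∈ x, substPatch _ (substSeq S _ n {E})
    rw [ih _ x, substPatch_biUnion]

/-- The product of the dilatation factors. -/
def prodLam (S : Fin k → Substitution d X) (a : ℕ → Fin k) (n : ℕ) : ℝ :=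
  ∏ i ∈ Finset.range n, (S (a i)).lam

lemma prodLam_pos (S : Fin k → Substitution d X) (a : ℕ → Fin k) (n : ℕ) :
    0 < prodLam S a n :=
  Finset.prod_pos fun i _ => lt_trans one_pos (S (a i)).one_lt_lam

lemma prodLam_succ' (S : Fin k → Substitution d X) (a : ℕ → Fin k) (n : ℕ) :
    prodLam S a (n + 1) = (S (a 0)).lam * prodLam S (fun i => a (i + 1)) n := by
  unfold prodLam
  rw [Finset.prod_range_succ']
  ring

lemma substSeq_patchTrans (S : Fin k → Substitution d X) (a : ℕ → Fin k) (n : ℕ)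
    (t : Pt d) (x : Patch d) :
    substSeq S a n (patchTrans t x) = patchTrans (prodLam S a n • t) (substSeq S a n x) := by
  induction n generalizing a t with
  | zero => simp [substSeq, prodLam]
  | succ n ih =>
    show substPatch _ (substSeq S _ n (patchTrans t x)) = _
    rw [ih, substPatch_patchTrans, prodLam_succ', smul_smul]
    rfl

lemma substSeq_add (S : Fin k → Substitution d X) (a : ℕ → Fin k) (n m : ℕ) (x : Patch d) :
    substSeq S a (n + m) x = substSeq S a n (substSeq S (fun i => a (n + i)) m x) := by
  induction n generalizing a with
  | zero =>
    simp only [Nat.zero_add, substSeq, id]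
  | succ n ih =>
    have h1 : n + 1 + m = (n + m) + 1 := by omega
    have h2 : (fun i => a (n + 1 + i)) = (fun i => a ((n + i) + 1)) := by
      funext i; congr 1; omega
    rw [h1, h2]
    show substPatch _ (substSeq S (fun i => a (i + 1)) (n + m) x) =
      substPatch _ (substSeq S (fun i => a (i + 1)) n (substSeq S (fun i => a ((n + i) + 1)) m x))
    rw [ih (fun i => a (i + 1))]

lemma singleton_mem_patches {E : Set (Pt d)} (hE : E ∈ TilesOf X) :
    ({E} : Patch d) ∈ Patches X := by
  obtain ⟨x, hx, hEx⟩ := hE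
  exact ⟨Set.finite_singleton E, x, hx, Set.singleton_subset_iff.2 hEx⟩

lemma mem_tilesOf_of_patches {y : Patch d} (hy : y ∈ Patches X) {E : Set (Pt d)} (hE : E ∈ y) :
    E ∈ TilesOf X := by
  obtain ⟨_, x, hx, hsub⟩ := hy
  exact ⟨x, hx, hsub hE⟩

lemma substPatch_mem_patches (S : Substitution d X) {x : Patch d} (hx : x ∈ Patches X) :
    substPatch S x ∈ Patches X := S.maps_patches x hx

lemma substSeq_mem_patches (S : Fin k → Substitution d X) (a : ℕ → Fin k) (n : ℕ)
    {x : Patch d} (hx : x ∈ Patches X) : substSeq S a n x ∈ Patches X := by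
  induction n generalizing a with
  | zero => exact hx
  | succ n ih => exact substPatch_mem_patches _ (ih _)

lemma psupp_substPatch (S : Substitution d X) {x : Patch d} (hx : x ∈ Patches X) :
    psupp (substPatch S x) = (fun p => S.lam • p) '' psupp x := by
  unfold substPatch
  have : psupp (⋃ D ∈ x, S.map D) = ⋃ D ∈ x, psupp (S.map D) := by
    unfold psupp
    ext p
    simp only [Set.mem_iUnion]
    constructor
    · rintro ⟨E, ⟨⟨D, hD, hE⟩, hp⟩⟩
      exact ⟨D, hD, E, hE, hp⟩
    · rintro ⟨D, hD, E, hE, hp⟩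
      exact ⟨E, ⟨⟨D, hD, hE⟩, hp⟩⟩
  rw [this]
  rw [show (⋃ D ∈ x, psupp (S.map D)) = ⋃ D ∈ x, (fun p => S.lam • p) '' D by
    refine Set.iUnion₂_congr fun D hD => ?_
    exact S.supp_eq D (mem_tilesOf_of_patches hx hD)]
  rw [← Set.image_iUnion₂]
  rfl

lemma psupp_substSeq (S : Fin k → Substitution d X) (a : ℕ → Fin k) (n : ℕ)
    {x : Patch d} (hx : x ∈ Patches X) :
    psupp (substSeq S a n x) = (fun p => prodLam S a n • p) '' psupp x := by
  induction n generalizing a with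
  | zero => simp [substSeq, prodLam]
  | succ n ih =>
    show psupp (substPatch _ (substSeq S _ n x)) = _
    rw [psupp_substPatch _ (substSeq_mem_patches S _ n hx), ih, Set.image_image,
      prodLam_succ']
    simp only [smul_smul]

lemma isTile_of_tilesOf (hX : ∀ x ∈ X, IsTiling x) {E : Set (Pt d)} (hE : E ∈ TilesOf X) :
    IsTile E := by
  obtain ⟨x, hx, hEx⟩ := hE
  exact (hX x hx).1.1 E hEx

lemma interior_nonempty_of_isTile {E : Set (Pt d)} (hE : IsTile E) :
    (interior E).Nonempty := by
  by_contra h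
  rw [Set.not_nonempty_iff_eq_empty] at h
  have := hE.2.2
  rw [h, closure_empty] at this
  exact hE.2.1.nonempty.ne_empty this

lemma exists_ball_subset_interior {E : Set (Pt d)} (hE : IsTile E) :
    ∃ (p : Pt d) (ε : ℝ), 0 < ε ∧ ball p ε ⊆ interior E := by
  obtain ⟨p, hp⟩ := interior_nonempty_of_isTile hE
  obtain ⟨ε, hε, hball⟩ := Metric.isOpen_iff.1 isOpen_interior p hp
  exact ⟨p, ε, hε, hball⟩

/-- A nonempty compact set has no nontrivial translation symmetry. -/
lemma eq_zero_of_tileTrans_eq {E : Set (Pt d)} (hc : IsCompact E) (hne : E.Nonempty)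
    {v : Pt d} (h : tileTrans v E = E) : v = 0 := by
  by_contra hv
  obtain ⟨C, hC⟩ := (hc.isBounded.subset_closedBall 0)
  obtain ⟨p, hp⟩ := hne
  have key : ∀ n : ℕ, (n : ℝ) • v + p ∈ E := by
    intro n
    induction n with
    | zero => simpa using hp
    | succ n ih =>
      have : v + ((n : ℝ) • v + p) ∈ tileTrans v E := ⟨_, ih, rfl⟩
      rw [h] at this
      convert this using 1
      push_cast
      rw [add_smul, one_smul]
      abel
  have hvpos : 0 < ‖v‖ := norm_pos_iff.2 hv
  obtain ⟨n, hn⟩ := exists_nat_gt ((C + ‖p‖) / ‖v‖)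
  have h1 : ‖(n : ℝ) • v + p‖ ≤ C := by
    have := hC (key n)
    simpa [dist_eq_norm] using this
  have h2 : (n : ℝ) * ‖v‖ - ‖p‖ ≤ ‖(n : ℝ) • v + p‖ := by
    have := norm_add_le ((n : ℝ) • v + p) (-p)
    simp only [add_neg_cancel_right, norm_neg] at this
    have h3 : ‖(n : ℝ) • v‖ = (n : ℝ) * ‖v‖ := by
      rw [norm_smul]; simp
    linarith
  have : (n : ℝ) * ‖v‖ ≤ C + ‖p‖ := by linarith
  rw [div_lt_iff₀ hvpos] at hn
  linarith

/-- Positivity of an entry of a product of structure matrices yields a translated copy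
of the corresponding prototile in the composed substitution of a prototile. -/
lemma matSeq_pos_exists {l : ℕ} (Dp : Fin l → Set (Pt d)) (S : Fin k → Substitution d X) :
    ∀ (r : ℕ) (a : ℕ → Fin k) (i j : Fin l),
      0 < matSeq (fun i => structMat Dp (S i)) a r i j →
      ∃ t : Pt d, tileTrans t (Dp i) ∈ substSeq S a r {Dp j} := by
  intro r
  induction r with
  | zero =>
    intro a i j hpos
    have : i = j := by
      by_contra hij
      simp [matSeq, Matrix.one_apply, hij] at hpos
    subst this
    exact ⟨0, by rw [tileTrans_zero]; exact rfl⟩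
  | succ r ih =>
    intro a i j hpos
    rw [show matSeq (fun i => structMat Dp (S i)) a (r + 1) =
        structMat Dp (S (a 0)) * matSeq (fun i => structMat Dp (S i)) (fun i => a (i + 1)) r
      from rfl, Matrix.mul_apply] at hpos
    obtain ⟨q, -, hq⟩ : ∃ q ∈ Finset.univ,
        0 < structMat Dp (S (a 0)) i q *
          matSeq (fun i => structMat Dp (S i)) (fun i => a (i + 1)) r q j := by
      by_contra hcon
      push_neg at hcon
      have : ∀ q ∈ (Finset.univ : Finset (Fin l)),
          structMat Dp (S (a 0)) i q *
            matSeq (fun i => structMat Dp (S i)) (fun i => a (i + 1)) r q j = 0 :=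
        fun q hqq => Nat.eq_zero_of_le_zero (hcon q hqq)
      rw [Finset.sum_eq_zero this] at hpos
      exact lt_irrefl 0 hpos
    have h1 : 0 < structMat Dp (S (a 0)) i q := Nat.pos_of_ne_zero (by
      intro h0; rw [h0, Nat.zero_mul] at hq; exact lt_irrefl 0 hq)
    have h2 : 0 < matSeq (fun i => structMat Dp (S i)) (fun i => a (i + 1)) r q j := by
      rcases Nat.eq_zero_or_pos (matSeq (fun i => structMat Dp (S i)) (fun i => a (i + 1)) r q j)
        with h0 | h0
      · rw [h0, Nat.mul_zero] at hq; exact absurd hq (lt_irrefl 0)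
      · exact h0
    obtain ⟨t, ht⟩ := ih (fun i => a (i + 1)) q j h2
    obtain ⟨E, hE⟩ : {D | D ∈ (S (a 0)).map (Dp q) ∧ ∃ s : Pt d, D = tileTrans s (Dp i)}.Nonempty :=
      Set.nonempty_of_ncard_ne_zero h1.ne'
    obtain ⟨hEmem, s, hEs⟩ := hE
    refine ⟨(S (a 0)).lam • t + s, ?_⟩
    show _ ∈ substPatch (S (a 0)) (substSeq S (fun i => a (i + 1)) r {Dp j})
    have hsub : (S (a 0)).map (tileTrans t (Dp q)) ⊆
        substPatch (S (a 0)) (substSeq S (fun i => a (i + 1)) r {Dp j}) := by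
      intro G hG
      exact Set.mem_biUnion ht hG
    apply hsub
    rw [(S (a 0)).equivar t (Dp q), ← tileTrans_tileTrans, ← hEs]
    exact mem_patchTrans_of_mem hEmem _

/-- Baire-type covering lemma: if a nonempty open set is covered by finitely many closed
sets, one of them meets it in its interior. -/
lemma exists_interior_inter_of_cover {𝔉 : Set (Set (Pt d))} (hfin : 𝔉.Finite)
    (hcl : ∀ F ∈ 𝔉, IsClosed F) {U : Set (Pt d)} (hU : IsOpen U) (hne : U.Nonempty)
    (hcov : U ⊆ ⋃ F ∈ 𝔉, F) :
    ∃ F ∈ 𝔉, (interior F ∩ U).Nonempty := by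
  set T : Set (Set (Pt d)) := insert Uᶜ 𝔉 with hT
  have hcl' : ∀ F ∈ T, IsClosed F := by
    rintro F (rfl | hF)
    · exact hU.isClosed_compl
    · exact hcl F hF
  have hcount : T.Countable := (hfin.insert _).countable
  have hcover : ⋃₀ T = univ := by
    apply Set.eq_univ_of_forall
    intro z
    by_cases hz : z ∈ U
    · obtain ⟨F, hF, hzF⟩ := Set.mem_iUnion₂.1 (hcov hz)
      exact ⟨F, Set.mem_insert_of_mem _ hF, hzF⟩
    · exact ⟨Uᶜ, Set.mem_insert _ _, hz⟩
  have hdense := dense_sUnion_interior_of_closed hcl' hcount hcover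
  obtain ⟨z, hz1, hz2⟩ := hdense.exists_mem_open hU hne
  obtain ⟨F, hF, hzF⟩ := Set.mem_iUnion₂.1 hz1
  rcases hF with rfl | hF
  · exact absurd (interior_subset hzF) (by simpa using hz2)
  · exact ⟨F, hF, z, hzF, hz2⟩

lemma diam_image_smul_le {Λ : ℝ} (hΛ : 0 ≤ Λ) {s : Set (Pt d)}
    (hs : Bornology.IsBounded s) :
    Metric.diam ((fun p => Λ • p) '' s) ≤ Λ * Metric.diam s := by
  apply Metric.diam_le_of_forall_dist_le (by positivity)
  rintro _ ⟨p, hp, rfl⟩ _ ⟨q, hq, rfl⟩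
  rw [dist_smul₀]
  rw [Real.norm_eq_abs, abs_of_nonneg hΛ]
  exact mul_le_mul_of_nonneg_left (Metric.dist_le_diam_of_mem hs hp hq) hΛ

lemma diam_tileTrans_le {t : Pt d} {s : Set (Pt d)} (hs : Bornology.IsBounded s) :
    Metric.diam (tileTrans t s) ≤ Metric.diam s := by
  apply Metric.diam_le_of_forall_dist_le Metric.diam_nonneg
  rintro _ ⟨p, hp, rfl⟩ _ ⟨q, hq, rfl⟩
  rw [dist_add_left]
  exact Metric.dist_le_diam_of_mem hs hp hq

/-- In a tiling of `X`, only finitely many tiles meet a given closed ball. -/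
lemma finite_tiles_meeting {l : ℕ} (hX : ∀ x ∈ X, IsTiling x)
    {Dp : Fin l → Set (Pt d)} (hDp : IsPrototileBasis X Dp)
    {x : Patch d} (hx : x ∈ X) (c : Pt d) (ρ : ℝ) :
    {G | G ∈ x ∧ (G ∩ closedBall c ρ).Nonempty}.Finite := by
  classical
  have h1 : ∀ i, ∃ p ε, 0 < ε ∧ ball p ε ⊆ interior (Dp i) := fun i =>
    exists_ball_subset_interior (isTile_of_tilesOf hX (hDp.1 i))
  choose p ε hε hball using h1
  have h2 : ∀ i, ∃ C, Dp i ⊆ closedBall 0 C := fun i =>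
    ((isTile_of_tilesOf hX (hDp.1 i)).1.isBounded).subset_closedBall 0
  choose C hC using h2
  set 𝒯 : Set (Set (Pt d)) := {G | G ∈ x ∧ (G ∩ closedBall c ρ).Nonempty} with h𝒯
  rw [← Set.not_infinite]
  intro hinf
  have hdecomp : 𝒯 ⊆ ⋃ i : Fin l, {G | G ∈ 𝒯 ∧ ∃ u, tileTrans u (Dp i) = G} := by
    intro G hG
    obtain ⟨i, u, hu⟩ := hDp.2.2 G ⟨x, hx, hG.1⟩
    exact Set.mem_iUnion.2 ⟨i, hG, u, hu⟩
  obtain ⟨i, hAi⟩ : ∃ i : Fin l, {G | G ∈ 𝒯 ∧ ∃ u, tileTrans u (Dp i) = G}.Infinite := by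
    by_contra hcon
    push_neg at hcon
    exact hinf (Set.Finite.subset (Set.finite_iUnion hcon) hdecomp)
  set U : Set (Pt d) := {u | tileTrans u (Dp i) ∈ 𝒯} with hUdef
  have hU : U.Infinite := by
    intro hUfin
    apply hAi
    apply (hUfin.image (fun u => tileTrans u (Dp i))).subset
    rintro G ⟨hG, u, rfl⟩
    exact ⟨u, hG, rfl⟩
  -- proto tile facts
  have hDptile : IsTile (Dp i) := isTile_of_tilesOf hX (hDp.1 i)
  -- separation
  have hsep : ∀ u ∈ U, ∀ u' ∈ U, u ≠ u' → 2 * ε i ≤ dist u u' := by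
    intro u hu u' hu' huu
    by_contra hlt
    push_neg at hlt
    have hGne : tileTrans u (Dp i) ≠ tileTrans u' (Dp i) := by
      intro heq
      apply huu
      have : tileTrans (-u' + u) (Dp i) = Dp i := by
        rw [← tileTrans_tileTrans, heq, tileTrans_tileTrans]
        simp [tileTrans_zero]
      have h0 := eq_zero_of_tileTrans_eq hDptile.1 hDptile.2.1.nonempty this
      exact (neg_add_eq_zero.1 h0).symm
    have hdisj := (hX x hx).1.2 _ hu.1 _ hu'.1 hGne
    have hballs : ∀ w : Pt d, w ∈ U → ball (w + p i) (ε i) ⊆ interior (tileTrans w (Dp i)) := by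
      intro w _
      have hopen : IsOpen (tileTrans w (interior (Dp i))) := by
        have : tileTrans w (interior (Dp i)) = (Homeomorph.addLeft w) '' interior (Dp i) := rfl
        rw [this, Homeomorph.isOpen_image]
        exact isOpen_interior
      have hsub : tileTrans w (interior (Dp i)) ⊆ tileTrans w (Dp i) :=
        Set.image_mono interior_subset
      have hint := interior_maximal hsub hopen
      intro z hz
      apply hint
      refine ⟨-w + z, ?_, by show w + (-w + z) = z; rw [← add_assoc, add_neg_cancel, zero_add]⟩
      apply hball i
      rw [mem_ball] at hz ⊢
      calc dist (-w + z) (p i) = dist z (w + p i) := by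
            rw [dist_eq_norm, dist_eq_norm]; congr 1; abel
        _ < ε i := hz
    set z := midpoint ℝ (u + p i) (u' + p i) with hz
    have hd : dist (u + p i) (u' + p i) = dist u u' := by
      rw [dist_eq_norm, dist_eq_norm]; congr 1; abel
    have hz1 : z ∈ ball (u + p i) (ε i) := by
      rw [mem_ball, hz, dist_comm, dist_left_midpoint]
      rw [show ‖(2 : ℝ)‖⁻¹ = 1 / 2 by norm_num, hd]
      linarith
    have hz2 : z ∈ ball (u' + p i) (ε i) := by
      rw [mem_ball, hz, dist_comm, dist_right_midpoint]
      rw [show ‖(2 : ℝ)‖⁻¹ = 1 / 2 by norm_num, hd]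
      linarith
    have : z ∈ interior (tileTrans u (Dp i)) ∩ interior (tileTrans u' (Dp i)) :=
      ⟨hballs u hu hz1, hballs u' hu' hz2⟩
    rw [hdisj] at this
    exact this
  -- boundedness
  have hbdd : U ⊆ closedBall 0 (‖c‖ + ρ + C i) := by
    intro u hu
    obtain ⟨-, z, ⟨w, hw, rfl⟩, hzball⟩ := hu
    rw [mem_closedBall, dist_zero_right]
    have h1 : ‖u + w‖ ≤ ‖c‖ + ρ := by
      have := mem_closedBall.1 hzball
      rw [dist_eq_norm] at this
      calc ‖u + w‖ = ‖(u + w - c) + c‖ := by congr 1; abel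
        _ ≤ ‖u + w - c‖ + ‖c‖ := norm_add_le _ _
        _ ≤ ρ + ‖c‖ := by linarith
        _ = ‖c‖ + ρ := by ring
    have h2 : ‖w‖ ≤ C i := by
      have := hC i hw
      rwa [mem_closedBall, dist_zero_right] at this
    calc ‖u‖ = ‖(u + w) + (-w)‖ := by congr 1; abel
      _ ≤ ‖u + w‖ + ‖(-w)‖ := norm_add_le _ _
      _ ≤ (‖c‖ + ρ) + C i := by rw [norm_neg]; linarith
  -- totally bounded + pigeonhole
  obtain ⟨t, htfin, htcov⟩ := (Metric.totallyBounded_iff.1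
    (isCompact_closedBall (0 : Pt d) (‖c‖ + ρ + C i)).totallyBounded) (ε i) (hε i)
  have hUcov : U ⊆ ⋃ y ∈ t, (U ∩ ball y (ε i)) := by
    intro u hu
    obtain ⟨y, hy, hball⟩ := Set.mem_iUnion₂.1 (htcov (hbdd hu))
    exact Set.mem_iUnion₂.2 ⟨y, hy, hu, hball⟩
  have : ∃ y ∈ t, ¬(U ∩ ball y (ε i)).Subsingleton := by
    by_contra hcon
    push_neg at hcon
    exact hU ((htfin.biUnion fun y hy => (hcon y hy).finite).subset hUcov)
  obtain ⟨y, -, hy⟩ := this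
  rw [Set.not_subsingleton_iff] at hy
  obtain ⟨u, ⟨hu, hub⟩, u', ⟨hu', hub'⟩, huu⟩ := hy
  have := hsep u hu u' hu' huu
  have : dist u u' < 2 * ε i := by
    calc dist u u' ≤ dist u y + dist y u' := dist_triangle _ _ _
      _ < ε i + ε i := add_lt_add (mem_ball.1 hub) (by rw [dist_comm]; exact mem_ball.1 hub')
      _ = 2 * ε i := by ring
  linarith [hsep u hu u' hu' huu]

lemma dist_add_smul_self (q : Pt d) {r : ℝ} (hr : 0 ≤ r) {e : Pt d} (he : ‖e‖ = 1) :
    dist (q + r • e) q = r := by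
  rw [dist_eq_norm, show q + r • e - q = r • e by abel, norm_smul, he, mul_one,
    Real.norm_eq_abs, abs_of_nonneg hr]

lemma dist_sub_smul_self (q : Pt d) {r : ℝ} (hr : 0 ≤ r) {e : Pt d} (he : ‖e‖ = 1) :
    dist (q - r • e) q = r := by
  rw [dist_eq_norm, show q - r • e - q = -(r • e) by abel, norm_neg, norm_smul, he, mul_one,
    Real.norm_eq_abs, abs_of_nonneg hr]

lemma dist_add_sub_smul (q : Pt d) {r : ℝ} (hr : 0 ≤ r) {e : Pt d} (he : ‖e‖ = 1) :
    dist (q + r • e) (q - r • e) = 2 * r := by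
  rw [dist_eq_norm, show q + r • e - (q - r • e) = (2 * r) • e by rw [two_mul, add_smul]; abel,
    norm_smul, he, mul_one, Real.norm_eq_abs, abs_of_nonneg (by linarith)]

lemma psupp_biUnion {ι : Type*} (s : Set ι) (f : ι → Patch d) :
    psupp (⋃ i ∈ s, f i) = ⋃ i ∈ s, psupp (f i) := by
  unfold psupp
  ext p
  simp only [Set.mem_iUnion]
  constructor
  · rintro ⟨E, ⟨⟨i, hi, hE⟩, hp⟩⟩
    exact ⟨i, hi, E, hE, hp⟩
  · rintro ⟨i, hi, E, hE, hp⟩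
    exact ⟨E, ⟨⟨i, hi, hE⟩, hp⟩⟩

end Aux

set_option maxHeartbeats 1000000 in
/-- Every tiling of `X_ā` is repetitive. -/
theorem multiSpace_repetitive
    {d l k : ℕ} (hd : 0 < d) (hl : 0 < l) (hk : 0 < k)
    (X : Set (Patch d)) (hX : ∀ x ∈ X, IsTiling x)
    (hXinv : TransInvariant X) (hXflc : FLC X)
    (Dp : Fin l → Set (Pt d)) (hDp : IsPrototileBasis X Dp)
    (S : Fin k → Substitution d X)
    (D : Set (Pt d)) (hD : D ∈ TilesOf X)
    (a : ℕ → Fin k)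
    (hprim : SeqPrimitive (fun i => structMat Dp (S i)) a)
    :
    ∀ x ∈ multiSpace S a D, ∀ x' ⊆ x, x'.Finite →
      ∃ r : ℝ, 0 < r ∧ ∀ c : Pt d, ∃ t : Pt d,
        psupp (patchTrans t x') ⊆ closedBall c r ∧ patchTrans t x' ⊆ x := by
  classical
  intro x hx x' hx'sub hx'fin
  obtain ⟨hxX, hxprop⟩ := hx
  -- Step 1: embed `x'` in a supertile of some level `n`.
  obtain ⟨n, hn, t₀, ht₀⟩ := hxprop x' hx'sub hx'fin
  -- Primitivity at position `n`.
  obtain ⟨N, hN⟩ := hprim n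
  set m₁ := n + (N + 1) with hm₁
  -- Prototile class of `D`.
  obtain ⟨i₀, s₀, hs₀⟩ := hDp.2.2 D hD
  -- Constants.
  set lmax : ℝ := 1 + ∑ i : Fin k, (S i).lam with hlmax
  have hlam_pos : ∀ i : Fin k, (0:ℝ) < (S i).lam := fun i => lt_trans one_pos (S i).one_lt_lam
  have hlmax_gt : (1:ℝ) < lmax := by
    have hne : (Finset.univ : Finset (Fin k)).Nonempty := by
      refine ⟨⟨0, hk⟩, Finset.mem_univ _⟩
    have : 0 < ∑ i : Fin k, (S i).lam := Finset.sum_pos (fun i _ => hlam_pos i) hne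
    rw [hlmax]; linarith
  have hlmax_pos : (0:ℝ) < lmax := lt_trans one_pos hlmax_gt
  have hlam_le : ∀ i : Fin k, (S i).lam ≤ lmax := by
    intro i
    have h := Finset.single_le_sum (f := fun j : Fin k => (S j).lam)
      (fun j _ => (hlam_pos j).le) (Finset.mem_univ i)
    rw [hlmax]; linarith
  have hprod_le : ∀ (b : ℕ → Fin k) (m : ℕ), prodLam S b m ≤ lmax ^ m := by
    intro b m
    induction m with
    | zero => simp [prodLam]
    | succ m ih =>
      rw [show prodLam S b (m + 1) = prodLam S b m * (S (b m)).lam from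
        Finset.prod_range_succ _ _, pow_succ]
      exact mul_le_mul ih (hlam_le _) (hlam_pos _).le (pow_pos hlmax_pos m).le
  set Rmax : ℝ := ∑ i : Fin l, Metric.diam (Dp i) with hRmax
  have hRmax_nonneg : 0 ≤ Rmax := Finset.sum_nonneg fun i _ => Metric.diam_nonneg
  have hdiam_le : ∀ i : Fin l, Metric.diam (Dp i) ≤ Rmax := fun i =>
    Finset.single_le_sum (fun j _ => Metric.diam_nonneg) (Finset.mem_univ i)
  have hDtile : IsTile D := isTile_of_tilesOf hX hD
  have hDpatches : ({D} : Patch d) ∈ Patches X := singleton_mem_patches hD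
  -- a unit vector
  set e0 : Pt d := EuclideanSpace.single ⟨0, hd⟩ (1:ℝ) with he0
  have he0norm : ‖e0‖ = 1 := by rw [he0, EuclideanSpace.norm_single]; norm_num
  -- `D` has positive diameter.
  obtain ⟨pD, εD, hεD, hballD⟩ := exists_ball_subset_interior hDtile
  have hdiamD_pos : 0 < Metric.diam D := by
    have h1 : pD ∈ D := interior_subset (hballD (mem_ball_self hεD))
    have h2 : pD + (εD / 2) • e0 ∈ D := by
      apply interior_subset (hballD _)
      rw [mem_ball, dist_eq_norm, show pD + (εD / 2) • e0 - pD = (εD / 2) • e0 by abel,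
        norm_smul, he0norm, mul_one, Real.norm_eq_abs, abs_of_pos (by linarith)]
      linarith
    have hd12 : dist (pD + (εD / 2) • e0) pD = εD / 2 := by
      rw [dist_eq_norm, show pD + (εD / 2) • e0 - pD = (εD / 2) • e0 by abel,
        norm_smul, he0norm, mul_one, Real.norm_eq_abs, abs_of_pos (by linarith)]
    calc (0:ℝ) < εD / 2 := by linarith
      _ = dist (pD + (εD / 2) • e0) pD := hd12.symm
      _ ≤ Metric.diam D := Metric.dist_le_diam_of_mem hDtile.1.isBounded h2 h1
  have hdiamD_nonneg : 0 ≤ Metric.diam D := hdiamD_pos.le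
  -- The radius.
  set ρ₂ : ℝ := lmax ^ m₁ * Rmax with hρ₂
  set ρ : ℝ := lmax ^ m₁ * (Rmax + Metric.diam D) + 1 with hρ
  have hpow_pos : (0:ℝ) < lmax ^ m₁ := pow_pos hlmax_pos m₁
  have hρ₂_nonneg : 0 ≤ ρ₂ := by positivity
  have hρ₂_le : ρ₂ + 1 ≤ ρ := by
    rw [hρ, hρ₂, mul_add]
    nlinarith
  have hρ_pos : 0 < ρ := by positivity
  refine ⟨ρ, hρ_pos, fun c => ?_⟩
  -- The local patch around `c`.
  set T : Patch d := {G | G ∈ x ∧ (G ∩ closedBall c ρ).Nonempty} with hT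
  have hTfin : T.Finite := finite_tiles_meeting hX hDp hxX c ρ
  have hTsub : T ⊆ x := fun G hG => hG.1
  have hball_supp : closedBall c ρ ⊆ psupp T := by
    intro z hz
    have hzx : z ∈ psupp x := by rw [(hX x hxX).2]; trivial
    obtain ⟨G, hGx, hzG⟩ := Set.mem_iUnion₂.1 hzx
    exact Set.mem_iUnion₂.2 ⟨G, ⟨hGx, ⟨z, hzG, hz⟩⟩, hzG⟩
  -- Embed the local patch into a supertile of level `M`.
  obtain ⟨M, hM, t, htT⟩ := hxprop T hTsub hTfin
  have hsuppM : psupp (substSeq S a M {D}) = (fun p => prodLam S a M • p) '' D := by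
    rw [psupp_substSeq S a M hDpatches, psupp_singleton]
  have hballshift : ∀ z : Pt d, z ∈ closedBall (t + c) ρ → -t + z ∈ closedBall c ρ := by
    intro z hz
    rw [mem_closedBall] at hz ⊢
    calc dist (-t + z) c = dist z (t + c) := by
          rw [dist_eq_norm, dist_eq_norm]; congr 1; abel
      _ ≤ ρ := hz
  have hbigball : closedBall (t + c) ρ ⊆ psupp (patchTrans t T) := by
    intro z hz
    rw [psupp_patchTrans]
    refine ⟨-t + z, hball_supp (hballshift z hz), ?_⟩
    show t + (-t + z) = z
    rw [← add_assoc, add_neg_cancel, zero_add]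
  have hbigsub : closedBall (t + c) ρ ⊆ psupp (substSeq S a M {D}) :=
    fun z hz => psupp_mono htT (hbigball hz)
  have hbigcomp : IsCompact (psupp (substSeq S a M {D})) := by
    rw [hsuppM]; exact hDtile.1.image (continuous_const_smul _)
  -- `M` is at least `m₁`.
  have hρ_le : 2 * ρ ≤ prodLam S a M * Metric.diam D := by
    have hp1 : (t + c) + ρ • e0 ∈ psupp (substSeq S a M {D}) := by
      apply hbigsub
      rw [mem_closedBall, dist_add_smul_self _ hρ_pos.le he0norm]
    have hp2 : (t + c) - ρ • e0 ∈ psupp (substSeq S a M {D}) := by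
      apply hbigsub
      rw [mem_closedBall, dist_sub_smul_self _ hρ_pos.le he0norm]
    have hdist : dist ((t + c) + ρ • e0) ((t + c) - ρ • e0) = 2 * ρ :=
      dist_add_sub_smul _ hρ_pos.le he0norm
    calc 2 * ρ = dist ((t + c) + ρ • e0) ((t + c) - ρ • e0) := hdist.symm
      _ ≤ Metric.diam (psupp (substSeq S a M {D})) :=
          Metric.dist_le_diam_of_mem hbigcomp.isBounded hp1 hp2
      _ ≤ prodLam S a M * Metric.diam D := by
          rw [hsuppM]
          exact diam_image_smul_le (prodLam_pos S a M).le hDtile.1.isBounded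
  have hM_ge : m₁ ≤ M := by
    by_contra hMM
    push_neg at hMM
    have h1 : prodLam S a M ≤ lmax ^ M := hprod_le a M
    have h2 : lmax ^ M ≤ lmax ^ m₁ := pow_le_pow_right₀ hlmax_gt.le hMM.le
    have h3 : prodLam S a M * Metric.diam D ≤ lmax ^ m₁ * Metric.diam D :=
      mul_le_mul_of_nonneg_right (le_trans h1 h2) hdiamD_nonneg
    have h4 : 2 * ρ ≤ lmax ^ m₁ * Metric.diam D := le_trans hρ_le h3
    rw [hρ, mul_add] at h4
    nlinarith
  -- Decompose the level-`M` supertile into level-`m₁` supertiles.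
  set a' : ℕ → Fin k := fun i => a (m₁ + i) with ha'
  set P' : Patch d := substSeq S a' (M - m₁) {D} with hP'
  have hdecomp : substSeq S a M {D} = ⋃ E ∈ P', substSeq S a m₁ {E} := by
    rw [show M = m₁ + (M - m₁) by omega, substSeq_add, ← substSeq_biUnion]
  have hP'patches : P' ∈ Patches X := substSeq_mem_patches S a' _ hDpatches
  -- Find the supertile containing `t + c`.
  have htc : t + c ∈ psupp (substSeq S a M {D}) := hbigsub (mem_closedBall_self hρ_pos.le)
  rw [hdecomp, psupp_biUnion] at htc
  obtain ⟨E, hE, htcE⟩ := Set.mem_iUnion₂.1 htc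
  have hEtiles : E ∈ TilesOf X := mem_tilesOf_of_patches hP'patches hE
  have hEtile : IsTile E := isTile_of_tilesOf hX hEtiles
  obtain ⟨q, u, hu⟩ := hDp.2.2 E hEtiles
  set Q : Patch d := substSeq S a m₁ {E} with hQ
  have hQsub : Q ⊆ substSeq S a M {D} := by
    rw [hdecomp]
    exact Set.subset_biUnion_of_mem (u := fun E => substSeq S a m₁ {E}) hE
  have hQpatches : Q ∈ Patches X :=
    substSeq_mem_patches _ _ _ (singleton_mem_patches hEtiles)
  have hsuppQ : psupp Q = (fun p => prodLam S a m₁ • p) '' E := by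
    rw [hQ, psupp_substSeq _ _ _ (singleton_mem_patches hEtiles), psupp_singleton]
  have hQcomp : IsCompact (psupp Q) := by
    rw [hsuppQ]; exact hEtile.1.image (continuous_const_smul _)
  have hdiamE : Metric.diam E ≤ Rmax := by
    rw [← hu]
    exact le_trans (diam_tileTrans_le (isTile_of_tilesOf hX (hDp.1 q)).1.isBounded)
      (hdiam_le q)
  have hdiamQ : Metric.diam (psupp Q) ≤ ρ₂ := by
    rw [hsuppQ, hρ₂]
    calc Metric.diam ((fun p => prodLam S a m₁ • p) '' E)
        ≤ prodLam S a m₁ * Metric.diam E :=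
          diam_image_smul_le (prodLam_pos S a m₁).le hEtile.1.isBounded
      _ ≤ lmax ^ m₁ * Rmax :=
          mul_le_mul (hprod_le a m₁) hdiamE Metric.diam_nonneg hpow_pos.le
  have hQball : psupp Q ⊆ closedBall (t + c) ρ₂ := fun z hz =>
    mem_closedBall.2 (le_trans (Metric.dist_le_diam_of_mem hQcomp.isBounded hz htcE) hdiamQ)
  -- Find a copy of `x'` inside `Q` using primitivity.
  obtain ⟨v, hv⟩ := matSeq_pos_exists Dp S (N + 1) (fun m => a (n + m)) i₀ q (hN i₀ q)
  set w : Pt d := prodLam S (fun m => a (n + m)) (N + 1) • u + v with hw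
  have hmid : tileTrans w (Dp i₀) ∈ substSeq S (fun m => a (n + m)) (N + 1) {E} := by
    rw [← hu, show ({tileTrans u (Dp q)} : Patch d) = patchTrans u {Dp q} from
      (patchTrans_singleton u _).symm, substSeq_patchTrans, hw, ← tileTrans_tileTrans]
    exact mem_patchTrans_of_mem hv _
  have hQn : Q = substSeq S a n (substSeq S (fun m => a (n + m)) (N + 1) {E}) := by
    rw [hQ, hm₁]; exact substSeq_add S a n (N + 1) {E}
  have hWcopy : substSeq S a n {tileTrans w (Dp i₀)} ⊆ Q := by
    rw [hQn]; exact substSeq_mono S a n (Set.singleton_subset_iff.2 hmid)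
  have hWD : ({tileTrans w (Dp i₀)} : Patch d) = patchTrans (w - s₀) {D} := by
    rw [patchTrans_singleton, ← hs₀, tileTrans_tileTrans, sub_add_cancel]
  set t₁ : Pt d := prodLam S a n • (w - s₀) + t₀ with ht₁
  have hcopyQ : patchTrans t₁ x' ⊆ Q := by
    have h2 : patchTrans (prodLam S a n • (w - s₀)) (patchTrans t₀ x') ⊆
        patchTrans (prodLam S a n • (w - s₀)) (substSeq S a n {D}) :=
      patchTrans_mono ht₀ _
    rw [patchTrans_patchTrans] at h2
    calc patchTrans t₁ x'
        ⊆ patchTrans (prodLam S a n • (w - s₀)) (substSeq S a n {D}) := h2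
      _ = substSeq S a n (patchTrans (w - s₀) {D}) := (substSeq_patchTrans S a n _ _).symm
      _ = substSeq S a n {tileTrans w (Dp i₀)} := by rw [← hWD]
      _ ⊆ Q := hWcopy
  -- Tiles of `Q` are tiles of the translated local patch.
  have habs : ∀ G ∈ Q, G ∈ patchTrans t T := by
    intro G hG
    have hGtile : IsTile G := isTile_of_tilesOf hX (mem_tilesOf_of_patches hQpatches hG)
    have hGsub : G ⊆ closedBall (t + c) ρ₂ := subset_trans (mem_psupp_of_mem hG) hQball
    have hFfin : (patchTrans t T).Finite := hTfin.image _
    have hFcl : ∀ F ∈ patchTrans t T, IsClosed F := by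
      rintro F ⟨F₀, hF₀, rfl⟩
      exact (((hX x hxX).1.1 F₀ (hTsub hF₀)).1.image (continuous_add_left t)).isClosed
    have hcov : interior G ⊆ ⋃ F ∈ patchTrans t T, F := by
      intro z hz
      have h1 : z ∈ closedBall (t + c) ρ :=
        closedBall_subset_closedBall (by linarith) (hGsub (interior_subset hz))
      exact hbigball h1
    obtain ⟨F, hF, z, hzF, hzG⟩ := exists_interior_inter_of_cover hFfin hFcl isOpen_interior
      (interior_nonempty_of_isTile hGtile) hcov
    by_cases hGF : G = F
    · rw [hGF]; exact hF
    · obtain ⟨-, xt, hxt, hsubxt⟩ := substSeq_mem_patches S a M hDpatches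
      have hdisj := (hX xt hxt).1.2 G (hsubxt (hQsub hG)) F (hsubxt (htT hF)) hGF
      exact absurd hdisj (by
        rw [← Set.not_nonempty_iff_eq_empty, not_not]
        exact ⟨z, hzG, hzF⟩)
  have hfinal : patchTrans t₁ x' ⊆ patchTrans t T := fun G hG => habs G (hcopyQ hG)
  refine ⟨-t + t₁, ?_, ?_⟩
  · have heq : patchTrans (-t + t₁) x' = patchTrans (-t) (patchTrans t₁ x') :=
      (patchTrans_patchTrans _ _ _).symm
    rw [heq, psupp_patchTrans]
    rintro _ ⟨z, hz, rfl⟩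
    have hz2 : z ∈ closedBall (t + c) ρ₂ := hQball (psupp_mono hcopyQ hz)
    rw [mem_closedBall] at hz2 ⊢
    calc dist (-t + z) c = dist z (t + c) := by
          rw [dist_eq_norm, dist_eq_norm]; congr 1; abel
      _ ≤ ρ₂ := hz2
      _ ≤ ρ := by linarith
  · have h1 : patchTrans (-t) (patchTrans t₁ x') ⊆ patchTrans (-t) (patchTrans t T) :=
      patchTrans_mono hfinal _
    rw [patchTrans_patchTrans, patchTrans_patchTrans, neg_add_cancel, patchTrans_zero] at h1
    exact subset_trans h1 hTsub

end
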